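/- Let f : [0,∞) → ℝ be continuous with f(0) ≥ 0, and L(t) = sup_{0 ≤ s ≤ t} max(-f(s), 0), ξ(t) = f(t) + L(t). If t is a point where ξ(t) > 0, then L is constant on a neighborhood of t. -/

import Mathlib

/-- For the explicit Skorohod solution on `[0,∞)`, the regulator
`L t = sup_{0 ≤ s ≤ t} (-f s)⁺` is locally constant wherever the reflected path
`ξ = f + L` is strictly positive. -/
theorem skorohod_regulator_locally_constant
    (f : ℝ → ℝ) (hf : ContinuousOn f (Set.Ici 0)) (hf0 : 0 ≤ f 0)
    (L : ℝ → ℝ)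
    (hL : ∀ t, L t = sSup ((fun s => max (-f s) 0) '' Set.Icc 0 t))
    (t : ℝ) (ht : 0 ≤ t) (hpos : 0 < f t + L t) :
    ∃ ε > 0, ∀ s, |s - t| < ε → L s = L t := by
  set g : ℝ → ℝ := fun s => max (-f s) 0 with hgdef
  have hgc : ContinuousOn g (Set.Ici 0) := fun x hx => ((hf x hx).neg).max continuousWithinAt_const
  have hbdd : ∀ b : ℝ, BddAbove (g '' Set.Icc 0 b) := fun b =>
    (isCompact_Icc.image_of_continuousOn (hgc.mono Set.Icc_subset_Ici_self)).bddAbove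
  have hg0 : g 0 = 0 := by simp [hgdef, max_eq_right, neg_nonpos.2 hf0]
  have hLnonneg : ∀ u, 0 ≤ u → 0 ≤ L u := by
    intro u hu
    rw [hL]
    calc (0:ℝ) = g 0 := hg0.symm
    _ ≤ sSup (g '' Set.Icc 0 u) := le_csSup (hbdd u) ⟨0, ⟨le_refl 0, hu⟩, rfl⟩
  -- splitting lemma
  have split : ∀ a b : ℝ, 0 ≤ a → a ≤ b →
      L b = max (L a) (sSup (g '' Set.Icc a b)) := by
    intro a b ha hab
    rw [hL, hL, ← Set.Icc_union_Icc_eq_Icc ha hab, Set.image_union]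
    exact csSup_union ((hbdd a)) (⟨g 0, 0, ⟨le_refl 0, ha⟩, rfl⟩)
      ((hbdd b).mono (Set.image_mono (Set.Icc_subset_Icc ha le_rfl)))
      ⟨g a, a, ⟨le_rfl, hab⟩, rfl⟩
  set m := (f t + L t) / 2 with hm
  have hm0 : 0 < m := half_pos hpos
  obtain ⟨ε, hε0, hε⟩ := Metric.continuousWithinAt_iff.1 (hf t ht) m hm0
  have key : ∀ u, 0 ≤ u → |u - t| < ε → g u ≤ max (L t - m) 0 := by
    intro u hu hdist
    have := hε hu (by simpa [Real.dist_eq] using hdist)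
    rw [Real.dist_eq] at this
    have h1 : -f u < L t - m := by
      have : f t - m < f u := by
        have := abs_lt.1 this
        linarith [this.1]
      have h2 : f t - m = -(L t - m) := by rw [hm]; ring
      linarith
    exact max_le_max h1.le le_rfl
  refine ⟨ε, hε0, ?_⟩
  intro s hs
  set s' := max s 0 with hs'def
  have hs'0 : 0 ≤ s' := le_max_right _ _
  have hLs : L s = L s' := by
    rcases le_or_gt 0 s with h | h
    · rw [hs'def, max_eq_left h]
    · have h1 : L s = 0 := by
        rw [hL, Set.Icc_eq_empty (by linarith), Set.image_empty, Real.sSup_empty]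
      have h2 : L s' = 0 := by
        rw [hs'def, max_eq_right h.le, hL]
        simp [hg0]
      rw [h1, h2]
  have hdist' : |s' - t| < ε := by
    rcases le_or_gt 0 s with h | h
    · rwa [hs'def, max_eq_left h]
    · rw [hs'def, max_eq_right h.le]
      rw [abs_lt] at hs ⊢
      constructor <;> linarith [hs.1, hs.2]
  rw [hLs]
  rcases le_total s' t with hst | hst
  · -- s' ≤ t
    have hsplit := split s' t hs'0 hst
    have hS : sSup (g '' Set.Icc s' t) ≤ max (L t - m) 0 := by
      refine csSup_le ⟨g s', s', ⟨le_rfl, hst⟩, rfl⟩ ?_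
      rintro x ⟨u, ⟨hu1, hu2⟩, rfl⟩
      apply key u (hs'0.trans hu1)
      rw [abs_lt] at hdist' ⊢
      constructor <;> linarith [hdist'.1]
    have hle : L s' ≤ L t := hsplit ▸ le_max_left _ _
    rcases eq_or_lt_of_le hle with h | h
    · exact h
    · have hSt : sSup (g '' Set.Icc s' t) = L t := by
        rcases max_cases (L s') (sSup (g '' Set.Icc s' t)) with ⟨h1, h2⟩ | ⟨h1, h2⟩
        · exfalso; rw [hsplit, h1] at h; exact lt_irrefl _ h
        · rw [hsplit, h1]
      have : L t ≤ max (L t - m) 0 := hSt ▸ hS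
      rcases le_max_iff.1 this with h1 | h1
      · linarith
      · have := hLnonneg t ht
        have hlt0 : L t = 0 := le_antisymm h1 this
        have := hLnonneg s' hs'0
        linarith
  · -- t ≤ s'
    have hsplit := split t s' ht hst
    have hS : sSup (g '' Set.Icc t s') ≤ L t := by
      refine csSup_le ⟨g t, t, ⟨le_rfl, hst⟩, rfl⟩ ?_
      rintro x ⟨u, ⟨hu1, hu2⟩, rfl⟩
      have h1 : g u ≤ max (L t - m) 0 := by
        apply key u (ht.trans hu1)
        rw [abs_lt] at hdist' ⊢
        constructor <;> linarith [hdist'.2]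
      have h2 : max (L t - m) 0 ≤ L t :=
        max_le (by linarith) (hLnonneg t ht)
      linarith
    rw [hsplit, max_eq_left hS]
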